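/- (Persistence of the spectrum, ODE form.) Let n ≥ 1, T > 0, let A : [0, T) → ℝ^{n×n} be continuous with A(t) antisymmetric for every t, and let S : [0, T) → ℝ^{n×n} be continuously differentiable with S(t) symmetric for every t and S′(t) = A(t)·S(t) − S(t)·A(t) for all t ∈ (0, T). Then the characteristic polynomial of S(t) equals the characteristic polynomial of S(0) for every t ∈ [0, T); in particular the spectrum of S(t) is independent of t. -/

import Mathlib

open Matrix Polynomial Finset

lemma my_eval_charpoly {n : ℕ} (M : Matrix (Fin n) (Fin n) ℝ) (r : ℝ) :
    (M.charpoly).eval r = (r • (1 : Matrix (Fin n) (Fin n) ℝ) - M).det := by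
  rw [Matrix.charpoly, _root_.eval_det, Matrix.matPolyEquiv_charmatrix]
  simp [Matrix.scalar, smul_eq_diagonal_mul, Pi.algebraMap_def]


lemma trace_adj_zero_of_det_ne {n : ℕ} (Sg B : Matrix (Fin n) (Fin n) ℝ) (x : ℝ)
    (hdet : (x • (1 : Matrix (Fin n) (Fin n) ℝ) - Sg).det ≠ 0) :
    (((x • (1 : Matrix (Fin n) (Fin n) ℝ) - Sg).adjugate) * (Sg * B - B * Sg)).trace = 0 := by
  set P : Matrix (Fin n) (Fin n) ℝ := x • 1 - Sg with hP
  have hU : IsUnit P.det := isUnit_iff_ne_zero.mpr hdet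
  have hcomm : P * Sg = Sg * P := by
    simp [hP, Matrix.sub_mul, Matrix.mul_sub, Matrix.smul_mul, Matrix.mul_smul]
  have h1 : P * P⁻¹ = 1 := Matrix.mul_nonsing_inv P hU
  have h2 : P⁻¹ * P = 1 := Matrix.nonsing_inv_mul P hU
  have hcomm' : Sg * P⁻¹ = P⁻¹ * Sg := by
    calc Sg * P⁻¹ = P⁻¹ * (P * Sg) * P⁻¹ := by rw [← mul_assoc, h2, one_mul]
    _ = P⁻¹ * (Sg * P) * P⁻¹ := by rw [hcomm]
    _ = P⁻¹ * Sg := by rw [mul_assoc, mul_assoc, h1, mul_one]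
  have hadj : P.adjugate = P.det • P⁻¹ := by
    rw [Matrix.inv_def, smul_smul, Ring.inverse_eq_inv, mul_inv_cancel₀ hdet, one_smul]
  have hadjcomm : Sg * P.adjugate = P.adjugate * Sg := by
    rw [hadj, Matrix.mul_smul, Matrix.smul_mul, hcomm']
  rw [Matrix.mul_sub, Matrix.trace_sub, ← mul_assoc, ← hadjcomm, mul_assoc,
    Matrix.trace_mul_comm Sg (P.adjugate * B), mul_assoc, sub_self]

lemma trace_adj_zero {n : ℕ} (Sg B : Matrix (Fin n) (Fin n) ℝ) (x : ℝ) :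
    (((x • (1 : Matrix (Fin n) (Fin n) ℝ) - Sg).adjugate) * (Sg * B - B * Sg)).trace = 0 := by
  have hcont : Continuous fun y : ℝ =>
      (((y • (1 : Matrix (Fin n) (Fin n) ℝ) - Sg).adjugate) * (Sg * B - B * Sg)).trace := by
    have h0 : Continuous fun y : ℝ => y • (1 : Matrix (Fin n) (Fin n) ℝ) - Sg :=
      ((continuous_id.smul continuous_const).sub continuous_const)
    exact (h0.matrix_adjugate.matrix_mul continuous_const).matrix_trace
  have hfin : Set.Finite {y : ℝ | (y • (1 : Matrix (Fin n) (Fin n) ℝ) - Sg).det = 0} := by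
    have : {y : ℝ | (y • (1 : Matrix (Fin n) (Fin n) ℝ) - Sg).det = 0}
        ⊆ {y : ℝ | (Sg.charpoly).IsRoot y} := by
      intro y hy
      simpa [Polynomial.IsRoot, my_eval_charpoly] using hy
    exact (Polynomial.finite_setOf_isRoot (Sg.charpoly_monic.ne_zero)).subset this
  have hdense : Dense {y : ℝ | (y • (1 : Matrix (Fin n) (Fin n) ℝ) - Sg).det = 0}ᶜ :=
    hfin.countable.dense_compl ℝ
  have := Continuous.ext_on hdense hcont continuous_const
    (fun y hy => trace_adj_zero_of_det_ne Sg B y hy)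
  exact congrFun this x

lemma sum_det_updateColumn {n : ℕ} (A B : Matrix (Fin n) (Fin n) ℝ) :
    ∑ i, (A.updateCol i (fun k => B k i)).det
      = ∑ σ : Equiv.Perm (Fin n), ((Equiv.Perm.sign σ : ℤ) : ℝ) *
          ∑ i, (∏ j ∈ Finset.univ.erase i, A (σ j) j) • B (σ i) i := by
  simp only [Matrix.det_apply', Matrix.updateCol_apply, smul_eq_mul]
  rw [Finset.sum_comm]
  refine Finset.sum_congr rfl fun σ _ => ?_
  rw [Finset.mul_sum]
  refine Finset.sum_congr rfl fun i _ => ?_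
  rw [← Finset.mul_prod_erase _ _ (Finset.mem_univ i)]
  have : ∀ j ∈ Finset.univ.erase i,
      (if j = i then B (σ j) i else A (σ j) j) = A (σ j) j := by
    intro j hj
    rw [if_neg (Finset.ne_of_mem_erase hj)]
  rw [Finset.prod_congr rfl this, if_pos rfl]
  ring

lemma trace_adjugate_mul {n : ℕ} (A B : Matrix (Fin n) (Fin n) ℝ) :
    (A.adjugate * B).trace = ∑ i, (A.updateCol i (fun k => B k i)).det := by
  refine Finset.sum_congr rfl fun i _ => ?_
  rw [← Matrix.cramer_apply, Matrix.cramer_eq_adjugate_mulVec]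
  simp [Matrix.diag, Matrix.mul_apply, Matrix.mulVec, dotProduct]

lemma hasDerivWithinAt_det {n : ℕ} {M : ℝ → Matrix (Fin n) (Fin n) ℝ}
    {M' : Matrix (Fin n) (Fin n) ℝ} {s : Set ℝ} {t : ℝ}
    (h : ∀ i j, HasDerivWithinAt (fun u => M u i j) (M' i j) s t) :
    HasDerivWithinAt (fun u => (M u).det) (((M t).adjugate * M').trace) s t := by
  have h1 : HasDerivWithinAt (fun u => (M u).det)
      (∑ σ : Equiv.Perm (Fin n), ((Equiv.Perm.sign σ : ℤ) : ℝ) *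
        ∑ i, (∏ j ∈ Finset.univ.erase i, M t (σ j) j) • M' (σ i) i) s t := by
    simp only [Matrix.det_apply']
    exact HasDerivWithinAt.fun_sum fun σ _ =>
      (HasDerivWithinAt.fun_finset_prod fun i _ => h (σ i) i).const_mul _
  rwa [trace_adjugate_mul, sum_det_updateColumn]


/-- Persistence of the spectrum, ODE form: if the symmetric matrix field `S` solves
`S′(t) = A(t)·S(t) − S(t)·A(t)` with `A(t)` antisymmetric and continuous, then the
characteristic polynomial of `S(t)` is constant in `t`; in particular the spectrum of
`S(t)` is independent of `t`. Derivatives are taken entrywise. -/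
theorem charpoly_persists (n : ℕ) (hn : 1 ≤ n) (T : ℝ) (hT : 0 < T)
    (A : ℝ → Matrix (Fin n) (Fin n) ℝ)
    (hA_cont : ∀ i j, ContinuousOn (fun t => A t i j) (Set.Ico 0 T))
    (hA_anti : ∀ t ∈ Set.Ico (0 : ℝ) T, (A t)ᵀ = -A t)
    (S S' : ℝ → Matrix (Fin n) (Fin n) ℝ)
    (hS_deriv : ∀ t ∈ Set.Ico (0 : ℝ) T, ∀ i j,
      HasDerivWithinAt (fun s => S s i j) (S' t i j) (Set.Ico 0 T) t)
    (hS'_cont : ∀ i j, ContinuousOn (fun t => S' t i j) (Set.Ico 0 T))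
    (hS_sym : ∀ t ∈ Set.Ico (0 : ℝ) T, (S t)ᵀ = S t)
    (hode : ∀ t ∈ Set.Ioo (0 : ℝ) T, S' t = A t * S t - S t * A t) :
    ∀ t ∈ Set.Ico (0 : ℝ) T, (S t).charpoly = (S 0).charpoly := by
  intro t ht
  have h0 : (0:ℝ) ∈ Set.Ico (0:ℝ) T := ⟨le_refl _, hT⟩
  have hS_cont : ∀ i j, ContinuousOn (fun u => S u i j) (Set.Ico 0 T) :=
    fun i j u hu => (hS_deriv u hu i j).continuousWithinAt
  have hode' : ∀ u ∈ Set.Ico (0:ℝ) T, S' u = A u * S u - S u * A u := by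
    intro u hu
    rcases eq_or_lt_of_le hu.1 with h | h
    · subst h
      ext i j
      have hne : Filter.NeBot (nhdsWithin (0:ℝ) (Set.Ioo 0 T)) := by
        rw [← mem_closure_iff_nhdsWithin_neBot, closure_Ioo hT.ne]
        exact ⟨le_refl _, hT.le⟩
      have hg : ContinuousOn (fun v => (A v * S v - S v * A v) i j) (Set.Ico 0 T) := by
        simp only [Matrix.sub_apply, Matrix.mul_apply]
        exact (continuousOn_finset_sum _ fun k _ => (hA_cont i k).mul (hS_cont k j)).sub
          (continuousOn_finset_sum _ fun k _ => (hS_cont i k).mul (hA_cont k j))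
      have l1 : Filter.Tendsto (fun v => S' v i j) (nhdsWithin 0 (Set.Ioo 0 T))
          (nhds (S' 0 i j)) := (hS'_cont i j 0 h0).mono Set.Ioo_subset_Ico_self
      have l2 : Filter.Tendsto (fun v => (A v * S v - S v * A v) i j)
          (nhdsWithin 0 (Set.Ioo 0 T)) (nhds ((A 0 * S 0 - S 0 * A 0) i j)) :=
        (hg 0 h0).mono Set.Ioo_subset_Ico_self
      have heq : (fun v => S' v i j) =ᶠ[nhdsWithin (0:ℝ) (Set.Ioo 0 T)]
          (fun v => (A v * S v - S v * A v) i j) :=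
        Filter.eventuallyEq_of_mem self_mem_nhdsWithin
          (fun v hv => by rw [hode v hv])
      exact tendsto_nhds_unique l1 (l2.congr' heq.symm)
    · exact hode u ⟨h, hu.2⟩
  have key : ∀ x : ℝ, (x • (1 : Matrix (Fin n) (Fin n) ℝ) - S t).det
      = (x • (1 : Matrix (Fin n) (Fin n) ℝ) - S 0).det := by
    intro x
    have hder : ∀ u ∈ Set.Ico (0:ℝ) T,
        HasDerivWithinAt (fun v => (x • (1 : Matrix (Fin n) (Fin n) ℝ) - S v).det) 0
          (Set.Ico 0 T) u := by
      intro u hu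
      have hM : ∀ i j, HasDerivWithinAt
          (fun v => (x • (1 : Matrix (Fin n) (Fin n) ℝ) - S v) i j)
          ((-(S' u)) i j) (Set.Ico 0 T) u := by
        intro i j
        simp only [Matrix.sub_apply, Matrix.neg_apply]
        simpa using (hasDerivWithinAt_const u (Set.Ico 0 T)
          ((x • (1 : Matrix (Fin n) (Fin n) ℝ)) i j)).fun_sub (hS_deriv u hu i j)
      have hdet := hasDerivWithinAt_det hM
      have hneg : -(S' u) = S u * A u - A u * S u := by
        rw [hode' u hu, neg_sub]
      rw [hneg, trace_adj_zero (S u) (A u) x] at hdet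
      exact hdet
    have hd : DifferentiableOn ℝ
        (fun v => (x • (1 : Matrix (Fin n) (Fin n) ℝ) - S v).det) (Set.Ico 0 T) :=
      fun u hu => (hder u hu).differentiableWithinAt
    have hz : ∀ u ∈ Set.Ico (0:ℝ) T, fderivWithin ℝ
        (fun v => (x • (1 : Matrix (Fin n) (Fin n) ℝ) - S v).det) (Set.Ico 0 T) u = 0 := by
      intro u hu
      rw [(hder u hu).hasFDerivWithinAt.fderivWithin ((uniqueDiffOn_Ico 0 T) u hu)]
      ext
      simp
    exact (convex_Ico (0:ℝ) T).is_const_of_fderivWithin_eq_zero hd hz ht h0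
  apply Polynomial.funext
  intro x
  rw [my_eval_charpoly, my_eval_charpoly, key x]
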